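/- Suppose E is a real Banach space, Q is a bounded symmetric positive definite bilinear form on E, and E = E₁ ⊕ E₂ is a splitting into Q-orthogonal subspaces. If E₁ is finite dimensional, then the projection P₁ : E → E₁ along E₂ is a bounded (continuous) linear map, and hence so is P₂(x) = x − P₁(x). -/

import Mathlib

/-- The `Q`-norm `‖x‖_Q = √(Q x x)` associated to a bilinear form `Q`. -/
noncomputable def normQ {E : Type*} [AddCommGroup E] [Module ℝ E]
    (Q : E →ₗ[ℝ] E →ₗ[ℝ] ℝ) (x : E) : ℝ :=
  Real.sqrt (Q x x)



/-- Type synonym for a submodule, to carry a different norm. -/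
def SubCopy {E : Type*} [AddCommGroup E] [Module ℝ E] (E₁ : Submodule ℝ E) : Type _ := E₁

instance {E : Type*} [AddCommGroup E] [Module ℝ E] (E₁ : Submodule ℝ E) :
    AddCommGroup (SubCopy E₁) := inferInstanceAs (AddCommGroup E₁)

instance {E : Type*} [AddCommGroup E] [Module ℝ E] (E₁ : Submodule ℝ E) :
    Module ℝ (SubCopy E₁) := inferInstanceAs (Module ℝ E₁)

/-- The identity, as a linear map from the copy to the ambient space. -/
def SubCopy.toAmbient {E : Type*} [AddCommGroup E] [Module ℝ E] (E₁ : Submodule ℝ E) :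
    SubCopy E₁ →ₗ[ℝ] E :=
  { toFun := fun v => ((show E₁ from v) : E)
    map_add' := fun _ _ => rfl
    map_smul' := fun _ _ => rfl }

lemma aux_norm_le {E : Type*} [NormedAddCommGroup E] [NormedSpace ℝ E]
    (Q : E →ₗ[ℝ] E →ₗ[ℝ] ℝ)
    (hQsymm : ∀ x y : E, Q x y = Q y x)
    (hQpos : ∀ x : E, x ≠ 0 → 0 < Q x x)
    (E₁ : Submodule ℝ E) [FiniteDimensional ℝ E₁] :
    ∃ c : ℝ, 0 < c ∧ ∀ v : E₁, ‖(v : E)‖ ≤ c * Real.sqrt (Q v v) := by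
  have hnn : ∀ x : E, 0 ≤ Q x x := by
    intro x
    rcases eq_or_ne x 0 with h | h
    · simp [h]
    · exact (hQpos x h).le
  let f := SubCopy.toAmbient E₁
  letI core : InnerProductSpace.Core ℝ (SubCopy E₁) :=
    { inner := fun v w => Q (f v) (f w)
      conj_inner_symm := fun v w => by simpa using hQsymm _ _
      re_inner_nonneg := fun v => by simpa using hnn (f v)
      add_left := fun u v w => by simp
      smul_left := fun u v r => by simp
      definite := fun v h => by
        by_contra hv
        have hv' : f v ≠ 0 := by
          simp only [f, SubCopy.toAmbient, LinearMap.coe_mk, AddHom.coe_mk]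
          intro h0
          exact hv (by exact Subtype.ext h0)
        exact absurd h (ne_of_gt (hQpos _ hv')) }
  letI : NormedAddCommGroup (SubCopy E₁) := core.toNormedAddCommGroup
  letI : InnerProductSpace ℝ (SubCopy E₁) := InnerProductSpace.ofCore core.toCore
  haveI : FiniteDimensional ℝ (SubCopy E₁) := ‹FiniteDimensional ℝ E₁›
  have hf : Continuous f := f.continuous_of_finiteDimensional
  let g : SubCopy E₁ →L[ℝ] E := ⟨f, hf⟩
  refine ⟨‖g‖ + 1, by positivity, fun v => ?_⟩
  let v' : SubCopy E₁ := v
  have h1 : ‖(v : E)‖ ≤ ‖g‖ * ‖v'‖ := g.le_opNorm v'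
  have h2 : ‖v'‖ = Real.sqrt (Q (v : E) (v : E)) := rfl
  have h3 : 0 ≤ Real.sqrt (Q (v : E) (v : E)) := Real.sqrt_nonneg _
  nlinarith [norm_nonneg g]


/-- Suppose `E` is a real Banach space, `Q` is a bounded symmetric positive
definite bilinear form on `E`, and `E = E₁ ⊕ E₂` is a splitting into `Q`-orthogonal subspaces.
If `E₁` is finite dimensional, then the projection `P₁ : E → E₁` along `E₂` is a bounded
(continuous) linear map, and hence so is `P₂ x = x - P₁ x`. -/
theorem stmt1 {E : Type*} [NormedAddCommGroup E] [NormedSpace ℝ E] [CompleteSpace E]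
    (Q : E →ₗ[ℝ] E →ₗ[ℝ] ℝ)
    (hQsymm : ∀ x y : E, Q x y = Q y x)
    (hQpos : ∀ x : E, x ≠ 0 → 0 < Q x x)
    (C_Q : ℝ) (hCQpos : 0 < C_Q)
    (hQbd : ∀ x y : E, |Q x y| ≤ C_Q * ‖x‖ * ‖y‖)
    (E₁ E₂ : Submodule ℝ E)
    (hinf : E₁ ⊓ E₂ = ⊥) (hsup : E₁ ⊔ E₂ = ⊤)
    (horth : ∀ a ∈ E₁, ∀ b ∈ E₂, Q a b = 0)
    (P₁ P₂ : E →ₗ[ℝ] E)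
    (hP₁mem : ∀ x : E, P₁ x ∈ E₁) (hP₂mem : ∀ x : E, P₂ x ∈ E₂)
    (hPsum : ∀ x : E, P₁ x + P₂ x = x)
    [FiniteDimensional ℝ E₁] :
    Continuous P₁ ∧ Continuous P₂ := by
  have hnn : ∀ x : E, 0 ≤ Q x x := by
    intro x
    rcases eq_or_ne x 0 with h | h
    · simp [h]
    · exact (hQpos x h).le
  obtain ⟨c, hc, hcle⟩ := aux_norm_le Q hQsymm hQpos E₁
  -- Q (P₁ x) (P₁ x) ≤ Q x x
  have key : ∀ x : E, Q (P₁ x) (P₁ x) ≤ Q x x := by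
    intro x
    have hx : Q x x = Q (P₁ x) (P₁ x) + Q (P₂ x) (P₂ x) := by
      conv_lhs => rw [← hPsum x]
      have h12 : Q (P₁ x) (P₂ x) = 0 := horth _ (hP₁mem x) _ (hP₂mem x)
      have h21 : Q (P₂ x) (P₁ x) = 0 := by rw [hQsymm]; exact h12
      simp [map_add, h12, h21]
    have := hnn (P₂ x)
    linarith
  have hb : ∀ x : E, ‖P₁ x‖ ≤ c * Real.sqrt C_Q * ‖x‖ := by
    intro x
    have h1 : ‖P₁ x‖ ≤ c * Real.sqrt (Q (P₁ x) (P₁ x)) :=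
      hcle ⟨P₁ x, hP₁mem x⟩
    have h2 : Real.sqrt (Q (P₁ x) (P₁ x)) ≤ Real.sqrt (Q x x) :=
      Real.sqrt_le_sqrt (key x)
    have h3 : Q x x ≤ C_Q * ‖x‖ * ‖x‖ := by
      have := hQbd x x
      have := abs_nonneg (Q x x)
      calc Q x x ≤ |Q x x| := le_abs_self _
        _ ≤ C_Q * ‖x‖ * ‖x‖ := hQbd x x
    have h4 : Real.sqrt (Q x x) ≤ Real.sqrt C_Q * ‖x‖ := by
      have : Real.sqrt (Q x x) ≤ Real.sqrt (C_Q * ‖x‖ * ‖x‖) := Real.sqrt_le_sqrt h3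
      calc Real.sqrt (Q x x) ≤ Real.sqrt (C_Q * ‖x‖ * ‖x‖) := this
        _ = Real.sqrt C_Q * ‖x‖ := by
            rw [mul_assoc, Real.sqrt_mul hCQpos.le, Real.sqrt_mul_self (norm_nonneg x)]
    calc ‖P₁ x‖ ≤ c * Real.sqrt (Q (P₁ x) (P₁ x)) := h1
      _ ≤ c * (Real.sqrt C_Q * ‖x‖) := by
          apply mul_le_mul_of_nonneg_left _ hc.le
          exact h2.trans h4
      _ = c * Real.sqrt C_Q * ‖x‖ := by ring
  have hP1 : Continuous P₁ := AddMonoidHomClass.continuous_of_bound P₁ _ hb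
  refine ⟨hP1, ?_⟩
  have hP2eq : (P₂ : E → E) = fun x => x - P₁ x := by
    funext x
    have h := hPsum x
    have : P₂ x = x - P₁ x := by rw [eq_sub_iff_add_eq, add_comm]; exact h
    exact this
  rw [hP2eq]
  exact continuous_id.sub hP1
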